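/- Let A ∈ ℂ^{n×n} be nonsingular and completely pivoted with pivots p_1,...,p_n. Then p_1 / (∏_{k=1}^n p_k)^{1/n} ≤ 2·n^{(ln n)/4}; that is, the geometric mean over k of the ratios p_1/p_k is at most 2·n^{(ln n)/4}. -/

import Mathlib

open Matrix BigOperators

/-- The Gaussian elimination iterate `A^(k)`: the Schur complement of the
leading `(n-k) × (n-k)` block of `A`. -/
noncomputable def geIter (n : ℕ) (A : Matrix (Fin n) (Fin n) ℂ) (k : ℕ) (hk : k ≤ n) :
    Matrix (Fin k) (Fin k) ℂ :=
  let f : Fin k → Fin n := fun i => ⟨n - k + i.val, by have := i.isLt; omega⟩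
  let g : Fin (n - k) → Fin n := fun j => ⟨j.val, by have := j.isLt; omega⟩
  A.submatrix f f - A.submatrix f g * (A.submatrix g g)⁻¹ * A.submatrix g f

/-- The `k`-th pivot `p_k = |(A^(k))_{1,1}|` (and `0` if `k = 0` or `k > n`). -/
noncomputable def pivot (n : ℕ) (A : Matrix (Fin n) (Fin n) ℂ) (k : ℕ) : ℝ :=
  if h : 0 < k ∧ k ≤ n then ‖geIter n A k h.2 ⟨0, h.1⟩ ⟨0, h.1⟩‖ else 0

/-- `‖M‖_max`, the maximum modulus of an entry of `M`. -/
noncomputable def maxEntry {k : ℕ} (M : Matrix (Fin k) (Fin k) ℂ) : ℝ :=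
  ⨆ i : Fin k, ⨆ j : Fin k, ‖M i j‖

/-- `A` is completely pivoted: for every `k = 1, ..., n`, the pivot `p_k`
equals the maximum modulus of an entry of `A^(k)`. -/
def CompletelyPivoted (n : ℕ) (A : Matrix (Fin n) (Fin n) ℂ) : Prop :=
  ∀ (k : ℕ) (h1 : 0 < k) (h2 : k ≤ n), pivot n A k = maxEntry (geIter n A k h2)

/-- All leading principal minors of `A` are nonzero (with `m = n` this says
`A` itself is nonsingular). -/
def LeadingMinorsNonzero (n : ℕ) (A : Matrix (Fin n) (Fin n) ℂ) : Prop :=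
  ∀ (m : ℕ) (hm : m ≤ n), (A.submatrix (Fin.castLE hm) (Fin.castLE hm)).det ≠ 0

/-! ### Auxiliary lemmas: Schur complement determinant identities -/

lemma schur_det (N : ℕ) (B : Matrix (Fin N) (Fin N) ℂ) (k : ℕ) (hk : k ≤ N)
    (h : (B.submatrix (Fin.castLE (Nat.sub_le N k)) (Fin.castLE (Nat.sub_le N k))).det ≠ 0) :
    B.det = (B.submatrix (Fin.castLE (Nat.sub_le N k)) (Fin.castLE (Nat.sub_le N k))).det *
      (geIter N B k hk).det := by
  set m := N - k with hm
  let e : Fin m ⊕ Fin k ≃ Fin N := finSumFinEquiv.trans (finCongr (by omega))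
  have hdet : B.det = (B.submatrix e e).det := (det_submatrix_equiv_self e B).symm
  set C := B.submatrix e e with hC
  have hblocks : C = fromBlocks C.toBlocks₁₁ C.toBlocks₁₂ C.toBlocks₂₁ C.toBlocks₂₂ :=
    (fromBlocks_toBlocks C).symm
  have h11 : C.toBlocks₁₁ = B.submatrix (Fin.castLE (Nat.sub_le N k)) (Fin.castLE (Nat.sub_le N k)) := by
    ext i j
    simp [toBlocks₁₁, hC, e, Matrix.submatrix_apply, finSumFinEquiv, Fin.castLE]
    congr 1
  have : Invertible C.toBlocks₁₁ := by
    rw [h11]; exact Matrix.invertibleOfIsUnitDet _ (Ne.isUnit h)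
  have hdet2 : C.det = C.toBlocks₁₁.det * (C.toBlocks₂₂ - C.toBlocks₂₁ * ⅟C.toBlocks₁₁ * C.toBlocks₁₂).det := by
    conv_lhs => rw [hblocks]
    exact det_fromBlocks₁₁ _ _ _ _
  have hinv : (⅟C.toBlocks₁₁ : Matrix (Fin m) (Fin m) ℂ) = (C.toBlocks₁₁)⁻¹ :=
    invOf_eq_nonsing_inv _
  have hgeIter : C.toBlocks₂₂ - C.toBlocks₂₁ * ⅟C.toBlocks₁₁ * C.toBlocks₁₂ = geIter N B k hk := by
    rw [hinv]
    show _ = _ - _ * _ * _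
    have h22 : C.toBlocks₂₂ = B.submatrix (fun i : Fin k => (⟨N - k + i.val, by omega⟩ : Fin N))
        (fun i : Fin k => (⟨N - k + i.val, by omega⟩ : Fin N)) := by
      ext i j
      simp [toBlocks₂₂, hC, e, Matrix.submatrix_apply, finSumFinEquiv]
      congr 1
    have h21 : C.toBlocks₂₁ = B.submatrix (fun i : Fin k => (⟨N - k + i.val, by omega⟩ : Fin N))
        (fun j : Fin (N-k) => (⟨j.val, by omega⟩ : Fin N)) := by
      ext i j
      simp [toBlocks₂₁, hC, e, Matrix.submatrix_apply, finSumFinEquiv, Fin.castLE]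
      congr 1
    have h12 : C.toBlocks₁₂ = B.submatrix (fun j : Fin (N-k) => (⟨j.val, by omega⟩ : Fin N))
        (fun i : Fin k => (⟨N - k + i.val, by omega⟩ : Fin N)) := by
      ext i j
      simp [toBlocks₁₂, hC, e, Matrix.submatrix_apply, finSumFinEquiv, Fin.castLE]
      congr 1
    have hgg : B.submatrix (fun j : Fin (N-k) => (⟨j.val, by omega⟩ : Fin N))
        (fun j : Fin (N-k) => (⟨j.val, by omega⟩ : Fin N)) =
        B.submatrix (Fin.castLE (Nat.sub_le N k)) (Fin.castLE (Nat.sub_le N k)) := rfl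
    rw [h22, h21, h12, h11, ← hgg]
  rw [hdet, hdet2, hgeIter, h11]

lemma geIter_entry (n k : ℕ) (A : Matrix (Fin n) (Fin n) ℂ) (h1 : 1 ≤ k) (hk : k ≤ n)
    (h' : n - k + 1 ≤ n) :
    geIter n A k hk ⟨0, h1⟩ ⟨0, h1⟩ =
      geIter (n - k + 1) (A.submatrix (Fin.castLE h') (Fin.castLE h')) 1 (by omega) 0 0 := by
  simp only [geIter, Matrix.sub_apply, Matrix.mul_apply, Matrix.submatrix_apply]
  rfl

noncomputable def ldet (n : ℕ) (A : Matrix (Fin n) (Fin n) ℂ) (m : ℕ) : ℝ :=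
  if h : m ≤ n then ‖(A.submatrix (Fin.castLE h) (Fin.castLE h)).det‖ else 0

section MatrixFacts

variable {n : ℕ} {A : Matrix (Fin n) (Fin n) ℂ}

lemma ldet_pos (hns : LeadingMinorsNonzero n A) {m : ℕ} (hm : m ≤ n) : 0 < ldet n A m := by
  rw [ldet, dif_pos hm]
  exact norm_pos_iff.mpr (hns m hm)

lemma ldet_top : ldet n A n = ‖A.det‖ := by
  rw [ldet, dif_pos le_rfl]
  rfl

lemma pivot_mul (hns : LeadingMinorsNonzero n A) {k : ℕ} (h1 : 1 ≤ k) (hk : k ≤ n) :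
    ldet n A (n - k + 1) = ldet n A (n - k) * pivot n A k := by
  have h' : n - k + 1 ≤ n := by omega
  have h2 : n - k ≤ n := Nat.sub_le n k
  set B' := A.submatrix (Fin.castLE h') (Fin.castLE h') with hB'
  have hcomp : B'.submatrix (Fin.castLE (Nat.sub_le (n-k+1) 1)) (Fin.castLE (Nat.sub_le (n-k+1) 1))
      = A.submatrix (Fin.castLE h2) (Fin.castLE h2) := by
    ext i j; rfl
  have hne : (B'.submatrix (Fin.castLE (Nat.sub_le (n-k+1) 1))
      (Fin.castLE (Nat.sub_le (n-k+1) 1))).det ≠ 0 := by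
    rw [hcomp]; exact hns _ h2
  have hs := schur_det (n-k+1) B' 1 (by omega) hne
  have hdet1 : (geIter (n-k+1) B' 1 (by omega)).det = geIter (n-k+1) B' 1 (by omega) 0 0 :=
    Matrix.det_fin_one _
  rw [ldet, dif_pos h', ldet, dif_pos h2, ← hB', hs, hcomp, norm_mul]
  congr 1
  rw [pivot, dif_pos ⟨h1, hk⟩, hdet1, geIter_entry n k A h1 hk h']

lemma prod_pivot (hns : LeadingMinorsNonzero n A) :
    ∀ k, k ≤ n → (∏ j ∈ Finset.Icc 1 k, pivot n A j) * ldet n A (n - k) = ldet n A n := by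
  intro k
  induction k with
  | zero => intro _; simp
  | succ k ih =>
    intro hk1
    have hk : k ≤ n := by omega
    rw [Finset.prod_Icc_succ_top (by omega : 1 ≤ k + 1)]
    have : n - (k + 1) + 1 = n - k := by omega
    calc (∏ j ∈ Finset.Icc 1 k, pivot n A j) * pivot n A (k+1) * ldet n A (n - (k+1))
        = (∏ j ∈ Finset.Icc 1 k, pivot n A j) * (ldet n A (n - (k+1)) * pivot n A (k+1)) := by ring
      _ = (∏ j ∈ Finset.Icc 1 k, pivot n A j) * ldet n A (n - (k+1) + 1) := by
          rw [← pivot_mul hns (by omega) (by omega)]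
      _ = ldet n A n := by rw [this]; exact ih hk

lemma prod_pivot_eq_abs_det (hns : LeadingMinorsNonzero n A) {k : ℕ} (hk : k ≤ n) :
    ∏ j ∈ Finset.Icc 1 k, pivot n A j = ‖(geIter n A k hk).det‖ := by
  have h2 : n - k ≤ n := Nat.sub_le n k
  have hs := schur_det n A k hk (hns _ h2)
  have habs : ldet n A n = ldet n A (n - k) * ‖(geIter n A k hk).det‖ := by
    rw [ldet_top, ldet, dif_pos h2, hs, norm_mul]
  have := prod_pivot hns k hk
  rw [habs] at this
  have hpos := ldet_pos hns h2
  apply mul_right_cancel₀ (ne_of_gt hpos)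
  linarith

lemma pivot_pos (hns : LeadingMinorsNonzero n A) {k : ℕ} (h1 : 1 ≤ k) (hk : k ≤ n) :
    0 < pivot n A k := by
  have := pivot_mul hns h1 hk
  have hp1 := ldet_pos hns (show n - k + 1 ≤ n by omega)
  have hp2 := ldet_pos hns (Nat.sub_le n k)
  nlinarith

end MatrixFacts

/-! ### Hadamard-type bound via AM-GM on eigenvalues -/

open ComplexOrder in
lemma abs_det_sq_le {k : ℕ} (hk : 0 < k) (M : Matrix (Fin k) (Fin k) ℂ) (p : ℝ)
    (hp : ∀ i j, ‖M i j‖ ≤ p) :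
    ‖M.det‖ ^ 2 ≤ ((k : ℝ) * p ^ 2) ^ k := by
  have hp0 : 0 ≤ p := le_trans (norm_nonneg _) (hp ⟨0, hk⟩ ⟨0, hk⟩)
  set G := M * Mᴴ with hG
  have hps : G.PosSemidef := Matrix.posSemidef_self_mul_conjTranspose M
  have hH : G.IsHermitian := hps.1
  set μ := hH.eigenvalues with hμ
  have hμ0 : ∀ i, 0 ≤ μ i := hps.eigenvalues_nonneg
  have hdetG : G.det = (‖M.det‖ ^ 2 : ℝ) := by
    rw [hG, Matrix.det_mul, Matrix.det_conjTranspose]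
    rw [← Complex.normSq_eq_norm_sq]
    exact Complex.mul_conj _
  have hdetG' : G.det = ((∏ i, μ i : ℝ) : ℂ) := by
    rw [hH.det_eq_prod_eigenvalues]
    push_cast
    rfl
  have hprod : ‖M.det‖ ^ 2 = ∏ i, μ i := by
    have := hdetG.symm.trans hdetG'
    exact_mod_cast this
  have htr1 : G.trace = ((∑ i, μ i : ℝ) : ℂ) := by
    nth_rewrite 1 [hH.spectral_theorem]
    rw [Unitary.conjStarAlgAut_apply, Matrix.trace_mul_cycle]
    have hu : (star (hH.eigenvectorUnitary : Matrix (Fin k) (Fin k) ℂ)) *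
        (hH.eigenvectorUnitary : Matrix (Fin k) (Fin k) ℂ) = 1 := by
      exact Matrix.UnitaryGroup.star_mul_self _
    rw [Matrix.mul_assoc, ← Matrix.mul_assoc (star _), hu, Matrix.one_mul,
      Matrix.trace_diagonal]
    push_cast
    rfl
  have htr2 : G.trace = ((∑ i, ∑ j, Complex.normSq (M i j) : ℝ) : ℂ) := by
    rw [Matrix.trace]
    push_cast
    apply Finset.sum_congr rfl
    intro i _
    rw [Matrix.diag_apply, hG, Matrix.mul_apply]
    apply Finset.sum_congr rfl
    intro j _
    rw [Matrix.conjTranspose_apply, ← Complex.mul_conj]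
    rfl
  have hsum : ∑ i, μ i = ∑ i, ∑ j, Complex.normSq (M i j) := by
    have := htr1.symm.trans htr2
    exact_mod_cast this
  have hsumle : ∑ i, μ i ≤ (k : ℝ) ^ 2 * p ^ 2 := by
    rw [hsum]
    calc ∑ i, ∑ j, Complex.normSq (M i j) ≤ ∑ _i : Fin k, ∑ _j : Fin k, p ^ 2 := by
          apply Finset.sum_le_sum; intro i _; apply Finset.sum_le_sum; intro j _
          rw [← Complex.sq_norm]
          exact pow_le_pow_left₀ (norm_nonneg _) (hp i j) 2
      _ = (k:ℝ)^2 * p^2 := by simp [Finset.sum_const]; ring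
  have hAM : ∏ i, μ i ≤ ((k:ℝ) * p ^ 2) ^ k := by
    have hw : ∀ i ∈ (Finset.univ : Finset (Fin k)), (0:ℝ) ≤ 1 / k := fun _ _ => by positivity
    have hw' : ∑ _i : Fin k, (1:ℝ)/k = 1 := by
      simp [Finset.sum_const]
      field_simp
    have hgm := Real.geom_mean_le_arith_mean_weighted Finset.univ (fun _ => 1/k) μ hw hw'
      (fun i _ => hμ0 i)
    have h1 : (∏ i, μ i) ^ ((1:ℝ)/k) = ∏ i, μ i ^ ((1:ℝ)/k) := by
      rw [← Real.finset_prod_rpow Finset.univ μ (fun i _ => hμ0 i)]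
    have h2 : (∏ i, μ i) ^ ((1:ℝ)/k) ≤ (k:ℝ) * p ^ 2 := by
      rw [h1]
      refine hgm.trans ?_
      calc ∑ i, (1:ℝ)/k * μ i = (1/k) * ∑ i, μ i := by rw [Finset.mul_sum]
        _ ≤ (1/k) * ((k:ℝ)^2 * p^2) := by
            apply mul_le_mul_of_nonneg_left hsumle (by positivity)
        _ = (k:ℝ) * p^2 := by field_simp
    have h3 : ((∏ i, μ i) ^ ((1:ℝ)/k)) ^ (k:ℕ) ≤ ((k:ℝ) * p^2) ^ (k:ℕ) :=
      pow_le_pow_left₀ (Real.rpow_nonneg (Finset.prod_nonneg fun i _ => hμ0 i) _) h2 k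
    have h4 : ((∏ i, μ i) ^ ((1:ℝ)/k)) ^ (k:ℕ) = ∏ i, μ i := by
      rw [← Real.rpow_natCast ((∏ i, μ i) ^ ((1:ℝ)/k)) k, ← Real.rpow_mul
        (Finset.prod_nonneg fun i _ => hμ0 i)]
      rw [one_div, inv_mul_cancel₀ (by positivity : (k:ℝ) ≠ 0), Real.rpow_one]
    rw [← h4]
    exact h3
  rw [hprod]
  exact hAM

/-! ### Analytic lemmas -/

lemma exp_two_mul_le {t : ℝ} (ht : 0 < t) (ht' : t ≤ 1/3) :
    Real.exp (2*t) ≤ (1+t)/(1-t) := by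
  have habs : |2*t| ≤ 1 := by rw [abs_of_pos (by linarith)]; linarith
  have hb := Real.exp_bound habs (by norm_num : 0 < 4)
  have hsum : ∑ i ∈ Finset.range 4, (2*t)^i / (Nat.factorial i : ℝ)
      = 1 + 2*t + 2*t^2 + (4/3)*t^3 := by
    simp [Finset.sum_range_succ, Nat.factorial]
    ring
  rw [hsum] at hb
  have hb' : Real.exp (2*t) ≤ 1 + 2*t + 2*t^2 + (4/3)*t^3 + (5/6)*t^4 := by
    have h1 : |2*t|^4 * ((4+1)/((Nat.factorial 4 : ℝ) * 4)) = (5/6)*t^4 := by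
      rw [abs_of_pos (by linarith : (0:ℝ) < 2*t)]
      norm_num [Nat.factorial]
      ring
    have := abs_le.mp hb
    nlinarith [this.2]
  refine hb'.trans ?_
  rw [le_div_iff₀ (by linarith : (0:ℝ) < 1 - t)]
  nlinarith [pow_pos ht 3, pow_pos ht 4, pow_pos ht 5]

lemma log_diff_ge {x : ℝ} (hx : 1 ≤ x) :
    2/(2*x+1) ≤ Real.log (x+1) - Real.log x := by
  have hx0 : (0:ℝ) < x := by linarith
  have ht : (0:ℝ) < 1/(2*x+1) := by positivity
  have ht' : 1/(2*x+1) ≤ 1/3 := by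
    rw [div_le_div_iff₀ (by linarith) (by norm_num)]; linarith
  have h := exp_two_mul_le ht ht'
  have heq : (1 + 1/(2*x+1))/(1 - 1/(2*x+1)) = (x+1)/x := by
    have h1 : 1 - 1/(2*x+1) ≠ 0 := by
      have : 1/(2*x+1) ≤ 1/3 := by rw [div_le_div_iff₀ (by linarith) (by norm_num)]; linarith
      intro hc; rw [sub_eq_zero] at hc; rw [← hc] at this; norm_num at this
    field_simp
    ring
  rw [heq] at h
  have h2 : 2 * (1/(2*x+1)) = 2/(2*x+1) := by ring
  rw [h2] at h
  have := (Real.le_log_iff_exp_le (by positivity : (0:ℝ) < (x+1)/x)).mpr h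
  rwa [Real.log_div (by linarith) (ne_of_gt hx0)] at this

lemma step_ineq {x : ℝ} (hx : 2 ≤ x) :
    Real.log (x+1) / x ≤ ((Real.log (x+1))^2 - (Real.log x)^2)/2
      + (Real.log x + 3)/(2*x) - (Real.log (x+1) + 3)/(2*(x+1)) := by
  set a := Real.log x with ha
  set b := Real.log (x+1) with hb
  have hx0 : (0:ℝ) < x := by linarith
  have ha0 : 0 ≤ a := Real.log_nonneg (by linarith)
  have hba : a ≤ b := Real.log_le_log (by linarith) (by linarith)
  have h1 : 2/(2*x+1) ≤ b - a := log_diff_ge (by linarith)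
  have h2 : b - a ≤ 1/x := by
    have := Real.log_le_sub_one_of_pos (show (0:ℝ) < (x+1)/x by positivity)
    rw [Real.log_div (by linarith) (ne_of_gt hx0)] at this
    have : b - a ≤ (x+1)/x - 1 := this
    have heq : (x+1)/x - 1 = 1/x := by rw [div_sub_one (ne_of_gt hx0)]; ring
    linarith [heq ▸ this]
  have h3 : a ≤ x - 1 := by
    have := Real.log_le_sub_one_of_pos hx0
    linarith
  have k1 : (b+a)/(2*x+1) ≤ (b^2 - a^2)/2 := by
    rw [div_le_div_iff₀ (by linarith) (by norm_num)]
    have hba0 : 0 ≤ b + a := by linarith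
    have h1' : 2 ≤ (b - a) * (2*x+1) := by
      rw [div_le_iff₀ (by linarith : (0:ℝ) < 2*x+1)] at h1
      linarith
    nlinarith [mul_le_mul_of_nonneg_left h1' hba0]
  have hxb : x*b ≤ x*a + 1 := by
    have := mul_le_mul_of_nonneg_left h2 (le_of_lt hx0)
    rw [mul_one_div, div_self (ne_of_gt hx0)] at this
    linarith [mul_sub x b a ▸ this]
  have lin : b / x ≤ (b+a)/(2*x+1) + (a+3)/(2*x) - (b+3)/(2*(x+1)) := by
    rw [← sub_nonneg]
    have key : (b+a)/(2*x+1) + (a+3)/(2*x) - (b+3)/(2*(x+1)) - b/x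
        = ((4*x^2+5*x+1)*(x*a) + (6*x+3)*x - (4*x^2+5*x+2)*(x*b))
          / (2*x*x*(x+1)*(2*x+1)) := by
      field_simp
      ring
    rw [key]
    apply div_nonneg _ (by positivity)
    nlinarith [mul_le_mul_of_nonneg_left h3 (le_of_lt hx0), sq_nonneg x]
  linarith

lemma sum_log_bound : ∀ n : ℕ, 2 ≤ n →
    ∑ k ∈ Finset.Icc 2 n, Real.log k / ((k : ℝ) - 1) ≤
      2*Real.log 2 + (Real.log n)^2/2 - (Real.log n + 3)/(2*n) := by
  intro n hn
  induction n, hn using Nat.le_induction with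
  | base =>
    rw [Finset.Icc_self, Finset.sum_singleton]
    norm_num
    nlinarith [Real.log_two_gt_d9, Real.log_two_lt_d9]
  | succ n hn ih =>
    rw [Finset.sum_Icc_succ_top (by omega : 2 ≤ n + 1)]
    have hx : (2:ℝ) ≤ (n:ℝ) := by exact_mod_cast hn
    have hstep := step_ineq hx
    have hcast : ((n+1 : ℕ) : ℝ) = (n:ℝ) + 1 := by push_cast; ring
    rw [hcast]
    have : (n:ℝ) + 1 - 1 = (n:ℝ) := by ring
    rw [this]
    linarith

/-! ### Main theorem -/

/-- Geometric mean growth bound for pivots: for a completely pivoted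
nonsingular matrix, `p_1 / (∏_{k=1}^n p_k)^{1/n} ≤ 2 n^{(ln n)/4}`. -/
theorem geomean_pivot_bound (n : ℕ) (hn : 1 ≤ n) (A : Matrix (Fin n) (Fin n) ℂ)
    (hns : LeadingMinorsNonzero n A) (hcp : CompletelyPivoted n A) :
    pivot n A 1 / (∏ k ∈ Finset.Icc 1 n, pivot n A k) ^ ((1 : ℝ) / n) ≤
      2 * (n : ℝ) ^ (Real.log n / 4) := by
  set L : ℕ → ℝ := fun j => Real.log (pivot n A j) with hL
  -- the Hadamard-type bound on partial sums of logs
  have key : ∀ k, 1 ≤ k → k ≤ n →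
      2 * ∑ j ∈ Finset.Icc 1 k, L j ≤ (k:ℝ) * Real.log k + 2*(k:ℝ)* L k := by
    intro k h1 hk
    have hent : ∀ i j, ‖geIter n A k hk i j‖ ≤ pivot n A k := by
      intro i j
      rw [hcp k h1 hk, maxEntry]
      have hb1 : ‖geIter n A k hk i j‖ ≤
          ⨆ j' : Fin k, ‖geIter n A k hk i j'‖ :=
        le_ciSup (f := fun j' => ‖geIter n A k hk i j'‖)
          (Set.Finite.bddAbove (Set.finite_range _)) j
      exact hb1.trans (le_ciSup (f := fun i' => ⨆ j' : Fin k, ‖geIter n A k hk i' j'‖)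
        (Set.Finite.bddAbove (Set.finite_range _)) i)
    have hsq := abs_det_sq_le (by omega) (geIter n A k hk) _ hent
    have hprod := prod_pivot_eq_abs_det hns hk
    rw [← hprod] at hsq
    have hppos : ∀ j ∈ Finset.Icc 1 k, 0 < pivot n A j := by
      intro j hj
      rw [Finset.mem_Icc] at hj
      exact pivot_pos hns hj.1 (le_trans hj.2 hk)
    have hQpos : 0 < ∏ j ∈ Finset.Icc 1 k, pivot n A j := Finset.prod_pos hppos
    have hpk : 0 < pivot n A k := pivot_pos hns h1 hk
    have hlog := Real.log_le_log (by positivity) hsq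
    rw [Real.log_pow, Real.log_pow, Real.log_mul (by positivity) (by positivity),
      Real.log_pow] at hlog
    have hlp : Real.log (∏ j ∈ Finset.Icc 1 k, pivot n A j)
        = ∑ j ∈ Finset.Icc 1 k, L j := by
      rw [Real.log_prod (fun j hj => ne_of_gt (hppos j hj))]
    rw [hlp] at hlog
    push_cast at hlog ⊢
    nlinarith [hlog]
  -- T k := sum of (L 1 - L j)
  set T : ℕ → ℝ := fun k => ∑ j ∈ Finset.Icc 1 k, (L 1 - L j) with hT
  set U : ℕ → ℝ := fun k => ∑ j ∈ Finset.Icc 2 k, Real.log j / (2*((j:ℝ) - 1)) with hU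
  have hsumT : ∀ k, 1 ≤ k → T k = (k:ℝ) * L 1 - ∑ j ∈ Finset.Icc 1 k, L j := by
    intro k hk1
    show (∑ j ∈ Finset.Icc 1 k, (L 1 - L j)) = _
    rw [Finset.sum_sub_distrib, Finset.sum_const, Nat.card_Icc]
    have : k + 1 - 1 = k := by omega
    rw [this]
    push_cast
    ring
  have hTU : ∀ k, 1 ≤ k → k ≤ n → T k ≤ (k:ℝ) * U k := by
    intro k hk1
    induction k with
    | zero => omega
    | succ k ih =>
      intro hkn
      rcases Nat.eq_or_lt_of_le hk1 with h | h
      · have : k = 0 := by omega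
        subst this
        show (∑ j ∈ Finset.Icc 1 1, (L 1 - L j)) ≤ _
        simp [hU]
      · have hk1' : 1 ≤ k := by omega
        have hkn' : k ≤ n := by omega
        have ihk := ih hk1' hkn'
        have hk0 : (0:ℝ) < (k:ℝ) := by positivity
        have hrec : ((k:ℝ)) * T (k+1) ≤ ((k:ℝ)+1) * T k + (((k:ℝ)+1)/2) * Real.log ((k:ℝ)+1) := by
          have hkey := key (k+1) (by omega) hkn
          have hTsplit : T (k+1) = T k + (L 1 - L (k+1)) := by
            show (∑ j ∈ Finset.Icc 1 (k+1), (L 1 - L j)) = (∑ j ∈ Finset.Icc 1 k, (L 1 - L j)) + _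
            exact Finset.sum_Icc_succ_top (by omega : 1 ≤ k + 1) _
          have hsumL := hsumT (k+1) (by omega)
          push_cast at hkey hsumL
          nlinarith [hkey, hTsplit, hsumL]
        have hUsplit : U (k+1) = U k + Real.log ((k:ℝ)+1) / (2*(k:ℝ)) := by
          show (∑ j ∈ Finset.Icc 2 (k+1), Real.log j / (2*((j:ℝ) - 1))) = _
          rw [Finset.sum_Icc_succ_top (by omega : 2 ≤ k+1)]
          push_cast
          norm_num
          rfl
        have hfin : (k:ℝ) * T (k+1) ≤ (k:ℝ) * (((k:ℝ)+1) * U (k+1)) := by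
          rw [hUsplit]
          have e : (k:ℝ) * (((k:ℝ)+1) * (U k + Real.log ((k:ℝ)+1)/(2*(k:ℝ))))
              = ((k:ℝ)+1) * ((k:ℝ) * U k) + (((k:ℝ)+1)/2) * Real.log ((k:ℝ)+1) := by
            field_simp
          rw [e]
          have h2 : ((k:ℝ)+1) * T k ≤ ((k:ℝ)+1) * ((k:ℝ) * U k) :=
            mul_le_mul_of_nonneg_left ihk (by positivity)
          linarith
        have := (mul_le_mul_iff_of_pos_left hk0).mp hfin
        push_cast
        exact this
  -- bound on T n
  have npos : (0:ℝ) < (n:ℝ) := by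
    have : (1:ℝ) ≤ (n:ℝ) := by exact_mod_cast hn
    linarith
  have hTn : T n ≤ (n:ℝ) * (Real.log 2 + (Real.log n)^2/4) := by
    rcases Nat.lt_or_ge n 2 with h2 | h2
    · have hn1 : n = 1 := by omega
      subst hn1
      have : T 1 = 0 := by
        show (∑ j ∈ Finset.Icc 1 1, (L 1 - L j)) = 0
        simp
      rw [this]
      have := Real.log_nonneg (by norm_num : (1:ℝ) ≤ 2)
      positivity
    · have hsum := sum_log_bound n h2
      have hx2 : (2:ℝ) ≤ (n:ℝ) := by exact_mod_cast h2
      have hUn : U n = (∑ k ∈ Finset.Icc 2 n, Real.log k / ((k : ℝ) - 1)) / 2 := by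
        show (∑ j ∈ Finset.Icc 2 n, Real.log j / (2*((j:ℝ) - 1))) = _
        rw [Finset.sum_div]
        apply Finset.sum_congr rfl
        intro j _
        rw [div_div]
        ring_nf
      have hlogn0 : 0 ≤ Real.log n := Real.log_nonneg (by linarith)
      have hpos3 : 0 ≤ (Real.log n + 3)/(2*(n:ℝ)) := by positivity
      have hUb : U n ≤ Real.log 2 + (Real.log n)^2/4 := by
        rw [hUn]
        linarith
      calc T n ≤ (n:ℝ) * U n := hTU n hn le_rfl
        _ ≤ (n:ℝ) * (Real.log 2 + (Real.log n)^2/4) :=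
            mul_le_mul_of_nonneg_left hUb (le_of_lt npos)
  -- final assembly
  have hppos : ∀ j ∈ Finset.Icc 1 n, 0 < pivot n A j := by
    intro j hj
    rw [Finset.mem_Icc] at hj
    exact pivot_pos hns hj.1 hj.2
  have hQ : 0 < ∏ j ∈ Finset.Icc 1 n, pivot n A j := Finset.prod_pos hppos
  have hP1 : 0 < pivot n A 1 := pivot_pos hns le_rfl hn
  have hlhs : 0 < pivot n A 1 / (∏ k ∈ Finset.Icc 1 n, pivot n A k) ^ ((1 : ℝ) / n) := by
    apply div_pos hP1 (Real.rpow_pos_of_pos hQ _)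
  have hrhs : 0 < 2 * (n : ℝ) ^ (Real.log n / 4) := by
    have := Real.rpow_pos_of_pos npos (Real.log n / 4)
    linarith
  have hloglhs : Real.log (pivot n A 1 / (∏ k ∈ Finset.Icc 1 n, pivot n A k) ^ ((1 : ℝ) / n))
      ≤ Real.log 2 + (Real.log n)^2/4 := by
    rw [Real.log_div (ne_of_gt hP1) (ne_of_gt (Real.rpow_pos_of_pos hQ _)),
      Real.log_rpow hQ, Real.log_prod (fun j hj => ne_of_gt (hppos j hj))]
    have hsumn := hsumT n hn
    have : Real.log (pivot n A 1) - 1/(n:ℝ) * ∑ j ∈ Finset.Icc 1 n, L j = T n / n := by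
      rw [hsumn]
      field_simp
      ring
    rw [show (∑ j ∈ Finset.Icc 1 n, Real.log (pivot n A j)) = ∑ j ∈ Finset.Icc 1 n, L j from rfl]
    rw [show Real.log (pivot n A 1) = L 1 from rfl] at this ⊢
    rw [this]
    rw [div_le_iff₀ npos]
    calc T n ≤ (n:ℝ) * (Real.log 2 + (Real.log n)^2/4) := hTn
      _ = (Real.log 2 + (Real.log n)^2/4) * n := by ring
  have hlogrhs : Real.log (2 * (n : ℝ) ^ (Real.log n / 4))
      = Real.log 2 + (Real.log n)^2/4 := by
    rw [Real.log_mul (by norm_num) (ne_of_gt (Real.rpow_pos_of_pos npos _)),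
      Real.log_rpow npos]
    ring
  calc pivot n A 1 / (∏ k ∈ Finset.Icc 1 n, pivot n A k) ^ ((1 : ℝ) / n)
      = Real.exp (Real.log (pivot n A 1 / (∏ k ∈ Finset.Icc 1 n, pivot n A k) ^ ((1 : ℝ) / n))) :=
        (Real.exp_log hlhs).symm
    _ ≤ Real.exp (Real.log (2 * (n : ℝ) ^ (Real.log n / 4))) := by
        apply Real.exp_le_exp.mpr
        rw [hlogrhs]
        exact hloglhs
    _ = 2 * (n : ℝ) ^ (Real.log n / 4) := Real.exp_log hrhs
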